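/- Let Y be a nonnegative random variable with E[Y] < ∞, and for each k ≥ 1 let X_k be a Gamma(k,1)-distributed random variable independent of Y. Define ρ(t) = E[{Y/t}] for t > 0, A(u) = ∫₀^∞ ρ(ut)·ρ((1-u)t) dt for 0 < u < 1, and g_k^×(t) = E[{Y/(X_k t)}]. Then for all integers m, n ≥ 0, ⟨g_{n+1}^×, g_{m+1}^×⟩ = ∫₀^1 C(n+m, n) · u^n (1-u)^m · A(u) du, where ⟨f,h⟩ = ∫₀^∞ f(t)h(t) dt and C(n+m,n) is the binomial coefficient. -/

import Mathlib

open MeasureTheory Set ProbabilityTheory Real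
open scoped ENNReal NNReal

namespace Stmt12Aux

lemma lint_image {s : Set ℝ} {f f' : ℝ → ℝ}
    (hs : MeasurableSet s) (hf' : ∀ x ∈ s, HasDerivWithinAt f (f' x) s x)
    (hf : InjOn f s) (g : ℝ → ℝ≥0∞) :
    ∫⁻ x in f '' s, g x = ∫⁻ x in s, ENNReal.ofReal |f' x| * g (f x) := by
  simpa only [ContinuousLinearMap.det_toSpanSingleton] using
    lintegral_image_eq_lintegral_abs_det_fderiv_mul volume hs
      (fun x hx => (hf' x hx).hasFDerivWithinAt) hf g

lemma image_mul_Ioi {c : ℝ} (hc : 0 < c) : (fun t : ℝ => c * t) '' Ioi 0 = Ioi 0 := by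
  ext x
  constructor
  · rintro ⟨t, ht, rfl⟩
    exact mul_pos hc ht
  · intro hx
    exact ⟨x / c, div_pos hx hc, by field_simp⟩

/-- scaling substitution for lintegrals over `Ioi 0`. -/
lemma scaling (g : ℝ → ℝ≥0∞) {c : ℝ} (hc : 0 < c) :
    ∫⁻ s in Ioi (0:ℝ), g s = ENNReal.ofReal c * ∫⁻ t in Ioi (0:ℝ), g (c * t) := by
  have hderiv : ∀ x ∈ Ioi (0:ℝ), HasDerivWithinAt (fun t : ℝ => c * t) c (Ioi 0) x := by
    intro x _
    simpa using ((hasDerivWithinAt_id x (Ioi 0)).const_mul c)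
  have hinj : InjOn (fun t : ℝ => c * t) (Ioi 0) := fun a _ b _ h =>
    mul_left_cancel₀ hc.ne' h
  have h := lint_image measurableSet_Ioi hderiv hinj g
  rw [image_mul_Ioi hc] at h
  rw [h, abs_of_pos hc, lintegral_const_mul' _ _ ENNReal.ofReal_ne_top]

lemma image_ratio : (fun u : ℝ => (1 - u) / u) '' Ioo 0 1 = Ioi 0 := by
  ext w
  constructor
  · rintro ⟨u, ⟨hu0, hu1⟩, rfl⟩
    exact div_pos (by linarith) hu0
  · intro hw
    have h1w : (0:ℝ) < 1 + w := by linarith [mem_Ioi.mp hw]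
    refine ⟨1 / (1 + w), ⟨by positivity, ?_⟩, ?_⟩
    · rw [div_lt_one h1w]
      linarith [mem_Ioi.mp hw]
    · field_simp
      ring

lemma ratio_deriv : ∀ u ∈ Ioo (0:ℝ) 1,
    HasDerivWithinAt (fun u : ℝ => (1 - u) / u) (-(u ^ 2)⁻¹) (Ioo 0 1) u := by
  intro u hu
  have hu0 : u ≠ 0 := hu.1.ne'
  have h : HasDerivWithinAt (fun u : ℝ => u⁻¹ - 1) (-(u ^ 2)⁻¹) (Ioo 0 1) u := by
    simpa using (hasDerivWithinAt_inv hu0 (Ioo 0 1)).sub_const 1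
  refine h.congr (fun x hx => ?_) ?_
  · have hx0 : x ≠ 0 := hx.1.ne'
    field_simp
  · field_simp

lemma ratio_inj : InjOn (fun u : ℝ => (1 - u) / u) (Ioo 0 1) := by
  intro a ha b hb h
  have ha0 := ha.1.ne'
  have hb0 := hb.1.ne'
  field_simp at h
  nlinarith [h]

/-- ∫⁻_{x>0} x^j e^{-x} = j!. -/
lemma lint_gamma_one (j : ℕ) :
    ∫⁻ x in Ioi (0:ℝ), ENNReal.ofReal (x ^ j * exp (-x))
      = ENNReal.ofReal (j.factorial : ℝ) := by
  have hj : (0:ℝ) < (j:ℝ) + 1 := by positivity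
  have hint : IntegrableOn (fun x : ℝ => x ^ j * exp (-x)) (Ioi 0) := by
    have h := Real.GammaIntegral_convergent hj
    refine h.congr_fun (fun x hx => ?_) measurableSet_Ioi
    simp only [add_sub_cancel_right, rpow_natCast]
    rw [mul_comm]
  have hpos : 0 ≤ᵐ[volume.restrict (Ioi (0:ℝ))] fun x : ℝ => x ^ j * exp (-x) := by
    filter_upwards [self_mem_ae_restrict measurableSet_Ioi] with x hx
    have hx' : (0:ℝ) < x := hx
    positivity
  rw [← ofReal_integral_eq_lintegral_ofReal hint hpos]
  congr 1
  rw [← Real.Gamma_nat_eq_factorial j, Real.Gamma_eq_integral hj]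
  refine setIntegral_congr_fun measurableSet_Ioi fun x hx => ?_
  rw [add_sub_cancel_right, rpow_natCast, mul_comm]

/-- ∫⁻_{x>0} x^j e^{-cx} = j!/c^{j+1}. -/
lemma lint_gamma (j : ℕ) {c : ℝ} (hc : 0 < c) :
    ∫⁻ x in Ioi (0:ℝ), ENNReal.ofReal (x ^ j * exp (-(c * x)))
      = ENNReal.ofReal ((j.factorial : ℝ) / c ^ (j + 1)) := by
  have hcinv : (0:ℝ) < c⁻¹ := by positivity
  have h := scaling (fun x => ENNReal.ofReal (x ^ j * exp (-(c * x)))) hcinv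
  rw [h]
  have heq : ∀ t : ℝ, ENNReal.ofReal ((c⁻¹ * t) ^ j * exp (-(c * (c⁻¹ * t))))
      = ENNReal.ofReal ((c⁻¹) ^ j) * ENNReal.ofReal (t ^ j * exp (-t)) := by
    intro t
    rw [← ENNReal.ofReal_mul (by positivity)]
    congr 1
    rw [mul_pow, show c * (c⁻¹ * t) = t by field_simp]
    ring
  simp_rw [heq]
  rw [lintegral_const_mul' _ _ ENNReal.ofReal_ne_top, lint_gamma_one j,
    ← ENNReal.ofReal_mul (by positivity), ← ENNReal.ofReal_mul (le_of_lt hcinv)]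
  congr 1
  rw [div_eq_mul_inv, ← inv_pow, pow_succ]
  ring

end Stmt12Aux

open Stmt12Aux Real

set_option maxHeartbeats 2000000 in
theorem stmt12 {Ω : Type*} [MeasurableSpace Ω] (μ : Measure Ω) [IsProbabilityMeasure μ]
    (Y : Ω → ℝ) (X : ℕ → Ω → ℝ)
    (hYpos : ∀ ω, 0 ≤ Y ω) (hYint : Integrable Y μ) (hYmeas : Measurable Y)
    (hXmeas : ∀ k, Measurable (X k))
    (hXlaw : ∀ k, 1 ≤ k → Measure.map (X k) μ = gammaMeasure k 1)
    (hindep : ∀ k, IndepFun Y (X k) μ)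
    (ρ : ℝ → ℝ) (hρ : ∀ t, ρ t = ∫ ω, Int.fract (Y ω / t) ∂μ)
    (A : ℝ → ℝ) (hA : ∀ u, A u = ∫ t in Ioi (0 : ℝ), ρ (u * t) * ρ ((1 - u) * t))
    (m n : ℕ) :
    ∫ t in Ioi (0 : ℝ),
        (∫ ω, Int.fract (Y ω / (X (n + 1) ω * t)) ∂μ) *
        (∫ ω, Int.fract (Y ω / (X (m + 1) ω * t)) ∂μ) =
      ∫ u in Ioo (0 : ℝ) 1,
        (Nat.choose (n + m) n : ℝ) * u ^ n * (1 - u) ^ m * A u := by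
  classical
  have hfr_nonneg : ∀ x : ℝ, 0 ≤ Int.fract x := Int.fract_nonneg
  have hfr_le_one : ∀ x : ℝ, Int.fract x ≤ 1 := fun x => (Int.fract_lt_one x).le
  have hfrInt : ∀ g : Ω → ℝ, Measurable g → Integrable (fun ω => Int.fract (g ω)) μ := by
    intro g hg
    refine Integrable.mono' (integrable_const 1) hg.fract.aestronglyMeasurable ?_
    refine ae_of_all _ fun ω => ?_
    rw [Real.norm_eq_abs, abs_of_nonneg (hfr_nonneg _)]
    exact hfr_le_one _
  set ν : Measure ℝ := μ.map Y with hνdef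
  haveI hνprob : IsProbabilityMeasure ν := Measure.isProbabilityMeasure_map hYmeas.aemeasurable
  have hρnn : ∀ s, 0 ≤ ρ s := fun s => by
    rw [hρ]; exact integral_nonneg fun ω => hfr_nonneg _
  -- the ℝ≥0∞-valued version of ρ
  set Pρ : ℝ → ℝ≥0∞ := fun s => ∫⁻ y, ENNReal.ofReal (Int.fract (y / s)) ∂ν with hPρdef
  have hPρμ : ∀ s, Pρ s = ∫⁻ ω, ENNReal.ofReal (Int.fract (Y ω / s)) ∂μ := by
    intro s
    exact lintegral_map (ENNReal.measurable_ofReal.comp (measurable_id.div_const s).fract) hYmeas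
  have hPρ_eq : ∀ s, Pρ s = ENNReal.ofReal (ρ s) := by
    intro s
    rw [hPρμ s, hρ, ofReal_integral_eq_lintegral_ofReal (hfrInt _ (hYmeas.div_const s))
      (ae_of_all _ fun ω => hfr_nonneg _)]
  have hPρ_meas : Measurable Pρ := by
    apply Measurable.lintegral_prod_right'
      (f := fun p : ℝ × ℝ => ENNReal.ofReal (Int.fract (p.2 / p.1)))
    exact ENNReal.measurable_ofReal.comp (measurable_snd.div measurable_fst).fract
  have hρ_meas : Measurable ρ := by
    have : ρ = fun s => (Pρ s).toReal := funext fun s => by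
      rw [hPρ_eq s, ENNReal.toReal_ofReal (hρnn s)]
    rw [this]
    exact hPρ_meas.ennreal_toReal
  have hPρ_le_one : ∀ s, Pρ s ≤ 1 := by
    intro s
    rw [hPρμ s]
    calc ∫⁻ ω, ENNReal.ofReal (Int.fract (Y ω / s)) ∂μ
        ≤ ∫⁻ _, 1 ∂μ := lintegral_mono fun ω => ENNReal.ofReal_le_one.mpr (hfr_le_one _)
      _ = 1 := by simp
  set EY : ℝ := ∫ ω, Y ω ∂μ with hEYdef
  have hEYnn : 0 ≤ EY := integral_nonneg hYpos
  have hPρ_le : ∀ s : ℝ, 0 < s → Pρ s ≤ ENNReal.ofReal (EY / s) := by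
    intro s hs
    rw [hPρμ s]
    have h1 : ∀ ω, Int.fract (Y ω / s) ≤ Y ω / s := by
      intro ω
      have h0 : (0:ℝ) ≤ Y ω / s := div_nonneg (hYpos ω) hs.le
      have h2 : (0:ℝ) ≤ (⌊Y ω / s⌋ : ℝ) := by exact_mod_cast Int.floor_nonneg.mpr h0
      rw [← Int.self_sub_floor]
      linarith
    calc ∫⁻ ω, ENNReal.ofReal (Int.fract (Y ω / s)) ∂μ
        ≤ ∫⁻ ω, ENNReal.ofReal (Y ω / s) ∂μ :=
          lintegral_mono fun ω => ENNReal.ofReal_le_ofReal (h1 ω)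
      _ = ENNReal.ofReal (∫ ω, Y ω / s ∂μ) :=
          (ofReal_integral_eq_lintegral_ofReal (hYint.div_const s)
            (ae_of_all _ fun ω => div_nonneg (hYpos ω) hs.le)).symm
      _ = ENNReal.ofReal (EY / s) := by rw [integral_div]
  -- the ℝ≥0∞-valued version of A
  set PA : ℝ → ℝ≥0∞ := fun u => ∫⁻ s in Ioi (0:ℝ), Pρ (u * s) * Pρ ((1 - u) * s) with hPAdef
  have hPA_lt_top : ∀ u ∈ Ioo (0:ℝ) 1, PA u < ⊤ := by
    rintro u ⟨hu0, hu1⟩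
    have h1u : (0:ℝ) < 1 - u := by linarith
    set C : ℝ := EY ^ 2 / (u * (1 - u)) with hCdef
    have hsplit : Ioc (0:ℝ) 1 ∪ Ioi 1 = Ioi 0 := Ioc_union_Ioi_eq_Ioi zero_le_one
    have hPA : PA u = (∫⁻ s in Ioc (0:ℝ) 1, Pρ (u * s) * Pρ ((1 - u) * s))
        + ∫⁻ s in Ioi (1:ℝ), Pρ (u * s) * Pρ ((1 - u) * s) := by
      rw [show PA u = ∫⁻ s in Ioi (0:ℝ), Pρ (u * s) * Pρ ((1 - u) * s) from rfl,
        ← hsplit, lintegral_union measurableSet_Ioi Ioc_disjoint_Ioi_same]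
    rw [hPA]
    have hpart1 : (∫⁻ s in Ioc (0:ℝ) 1, Pρ (u * s) * Pρ ((1 - u) * s)) ≤ 1 := by
      calc ∫⁻ s in Ioc (0:ℝ) 1, Pρ (u * s) * Pρ ((1 - u) * s)
          ≤ ∫⁻ _ in Ioc (0:ℝ) 1, 1 :=
            lintegral_mono fun s => mul_le_one' (hPρ_le_one _) (hPρ_le_one _)
        _ = 1 := by simp
    have hpart2 : (∫⁻ s in Ioi (1:ℝ), Pρ (u * s) * Pρ ((1 - u) * s))
        ≤ ∫⁻ s in Ioi (1:ℝ), ENNReal.ofReal (C / s ^ 2) := by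
      refine setLIntegral_mono' measurableSet_Ioi fun s hs => ?_
      have hs1 : (1:ℝ) < s := hs
      have hs0 : (0:ℝ) < s := by linarith
      calc Pρ (u * s) * Pρ ((1 - u) * s)
          ≤ ENNReal.ofReal (EY / (u * s)) * ENNReal.ofReal (EY / ((1 - u) * s)) :=
            mul_le_mul' (hPρ_le _ (by positivity)) (hPρ_le _ (by positivity))
        _ = ENNReal.ofReal (EY / (u * s) * (EY / ((1 - u) * s))) :=
            (ENNReal.ofReal_mul (by positivity)).symm
        _ = ENNReal.ofReal (C / s ^ 2) := by
            congr 1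
            rw [hCdef]
            field_simp
    have hint : IntegrableOn (fun s : ℝ => C / s ^ 2) (Ioi 1) := by
      have h : IntegrableOn (fun s : ℝ => C * s ^ (-2:ℝ)) (Ioi 1) :=
        (integrableOn_Ioi_rpow_of_lt (show (-2:ℝ) < -1 by norm_num) one_pos).const_mul C
      refine IntegrableOn.congr_fun h (fun s hs => ?_) measurableSet_Ioi
      have hs0 : (0:ℝ) < s := lt_trans one_pos hs
      rw [rpow_neg hs0.le, show (2:ℝ) = ((2:ℕ):ℝ) by norm_num, rpow_natCast]
      rw [div_eq_mul_inv]
    have hfin2 : (∫⁻ s in Ioi (1:ℝ), ENNReal.ofReal (C / s ^ 2)) < ⊤ :=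
      hint.lintegral_lt_top
    exact lt_of_le_of_lt (add_le_add hpart1 hpart2)
      (lt_of_le_of_lt le_rfl (by
        exact ENNReal.add_lt_top.mpr ⟨ENNReal.one_lt_top, hfin2⟩))
  have hρρ_aesm : ∀ u : ℝ, AEStronglyMeasurable (fun t : ℝ => ρ (u * t) * ρ ((1 - u) * t))
      (volume.restrict (Ioi 0)) := by
    intro u
    exact ((hρ_meas.comp (measurable_id.const_mul u)).mul
      (hρ_meas.comp (measurable_id.const_mul (1 - u)))).aestronglyMeasurable
  have hAtoReal : ∀ u : ℝ, A u = (PA u).toReal := by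
    intro u
    rw [hA u, integral_eq_lintegral_of_nonneg_ae
      (ae_of_all _ fun t => mul_nonneg (hρnn _) (hρnn _)) (hρρ_aesm u)]
    congr 1
    refine lintegral_congr fun t => ?_
    rw [ENNReal.ofReal_mul (hρnn _), ← hPρ_eq, ← hPρ_eq]
  have hAeq : ∀ u ∈ Ioo (0:ℝ) 1, ENNReal.ofReal (A u) = PA u := by
    intro u hu
    rw [hAtoReal u, ENNReal.ofReal_toReal (hPA_lt_top u hu).ne]
  -- the key pointwise identity for the LHS integrand
  have key : ∀ (j : ℕ) (t : ℝ),
      ENNReal.ofReal (∫ ω, Int.fract (Y ω / (X (j+1) ω * t)) ∂μ)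
        = ∫⁻ x in Ioi (0:ℝ),
            ENNReal.ofReal (x ^ j * exp (-x) / (j.factorial : ℝ)) * Pρ (x * t) := by
    intro j t
    have hXY : Measurable fun ω => Y ω / (X (j+1) ω * t) :=
      hYmeas.div ((hXmeas _).mul_const t)
    rw [ofReal_integral_eq_lintegral_ofReal (hfrInt _ hXY) (ae_of_all _ fun ω => hfr_nonneg _)]
    have hFmeas : Measurable fun p : ℝ × ℝ => ENNReal.ofReal (Int.fract (p.2 / (p.1 * t))) :=
      ENNReal.measurable_ofReal.comp (measurable_snd.div (measurable_fst.mul_const t)).fract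
    have hpair := (indepFun_iff_map_prod_eq_prod_map_map (hXmeas (j+1)).aemeasurable
      hYmeas.aemeasurable).mp (hindep (j+1)).symm
    rw [hXlaw (j+1) (Nat.le_add_left 1 j)] at hpair
    have hgmeas : Measurable fun x : ℝ => Pρ (x * t) :=
      hPρ_meas.comp (measurable_id.mul_const t)
    calc ∫⁻ ω, ENNReal.ofReal (Int.fract (Y ω / (X (j+1) ω * t))) ∂μ
        = ∫⁻ p : ℝ × ℝ, ENNReal.ofReal (Int.fract (p.2 / (p.1 * t)))
            ∂((gammaMeasure ((j+1 : ℕ) : ℝ) 1).prod ν) := by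
          rw [← hpair]
          exact (lintegral_map hFmeas ((hXmeas _).prodMk hYmeas)).symm
      _ = ∫⁻ x, ∫⁻ y, ENNReal.ofReal (Int.fract (y / (x * t))) ∂ν
            ∂(gammaMeasure ((j+1 : ℕ) : ℝ) 1) := lintegral_prod _ hFmeas.aemeasurable
      _ = ∫⁻ x, Pρ (x * t) ∂(gammaMeasure ((j+1 : ℕ) : ℝ) 1) := rfl
      _ = ∫⁻ x in Ioi (0:ℝ),
            ENNReal.ofReal (x ^ j * exp (-x) / (j.factorial : ℝ)) * Pρ (x * t) := by
          rw [gammaMeasure, lintegral_withDensity_eq_lintegral_mul _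
            (show Measurable (gammaPDF ((j+1 : ℕ) : ℝ) 1)
              from (measurable_gammaPDFReal _ _).ennreal_ofReal) hgmeas]
          have h0 : ∀ᵐ x : ℝ ∂volume, x ≠ 0 := by
            rw [ae_iff]
            simp only [ne_eq, not_not, Set.setOf_eq_eq_singleton]
            exact measure_singleton 0
          have hae : ∀ᵐ x : ℝ ∂volume,
              (gammaPDF ((j+1 : ℕ) : ℝ) 1 * fun x => Pρ (x * t)) x
              = (Ioi (0:ℝ)).indicator
                  (fun x => ENNReal.ofReal (x ^ j * exp (-x) / (j.factorial : ℝ))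
                    * Pρ (x * t)) x := by
            filter_upwards [h0] with x hx
            rcases lt_or_gt_of_ne hx with hneg | hpos
            · rw [Pi.mul_apply, gammaPDF_of_neg hneg, zero_mul,
                indicator_of_notMem (by simp [hneg.not_gt])]
            · rw [Pi.mul_apply, indicator_of_mem (mem_Ioi.mpr hpos),
                gammaPDF_of_nonneg hpos.le]
              congr 2
              rw [Real.one_rpow, one_mul]
              push_cast
              rw [add_sub_cancel_right, rpow_natCast, Real.Gamma_nat_eq_factorial]
              field_simp
          rw [lintegral_congr_ae hae]
          exact lintegral_indicator measurableSet_Ioi _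
  -- notation
  set Φ : ℕ → ℝ → ℝ≥0∞ := fun j x => ENNReal.ofReal (x ^ j * exp (-x) / (j.factorial : ℝ))
    with hΦdef
  have hΦmeas : ∀ j, Measurable (Φ j) := by
    intro j
    exact (((measurable_id.pow_const j).mul measurable_id.neg.exp).div_const _).ennreal_ofReal
  have hΦ_ne_top : ∀ j x, Φ j x ≠ ⊤ := fun j x => ENNReal.ofReal_ne_top
  have hPρ_ne_top : ∀ s, Pρ s ≠ ⊤ :=
    fun s => (lt_of_le_of_lt (hPρ_le_one s) ENNReal.one_lt_top).ne
  have hPA_meas : Measurable PA := by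
    apply Measurable.lintegral_prod_right'
      (f := fun p : ℝ × ℝ => Pρ (p.1 * p.2) * Pρ ((1 - p.1) * p.2))
    exact (hPρ_meas.comp (measurable_fst.mul measurable_snd)).mul
      (hPρ_meas.comp ((measurable_const.sub measurable_fst).mul measurable_snd))
  set c₀ : ℝ := ((n+m).factorial : ℝ) / ((n.factorial : ℝ) * (m.factorial : ℝ)) with hc₀def
  have hc₀nn : 0 ≤ c₀ := by positivity
  -- conversion of both sides to lintegrals
  have hq_sm : ∀ k : ℕ, StronglyMeasurable
      (fun t : ℝ => ∫ ω, Int.fract (Y ω / (X k ω * t)) ∂μ) := by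
    intro k
    apply MeasureTheory.StronglyMeasurable.integral_prod_right'
      (f := fun p : ℝ × Ω => Int.fract (Y p.2 / (X k p.2 * p.1)))
    exact (((hYmeas.comp measurable_snd).div
      (((hXmeas k).comp measurable_snd).mul measurable_fst)).fract).stronglyMeasurable
  have hLHS : (∫ t in Ioi (0:ℝ),
      (∫ ω, Int.fract (Y ω / (X (n + 1) ω * t)) ∂μ) *
      (∫ ω, Int.fract (Y ω / (X (m + 1) ω * t)) ∂μ))
      = (∫⁻ t in Ioi (0:ℝ), (∫⁻ x in Ioi (0:ℝ), Φ n x * Pρ (x * t))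
          * (∫⁻ x in Ioi (0:ℝ), Φ m x * Pρ (x * t))).toReal := by
    rw [integral_eq_lintegral_of_nonneg_ae
      (ae_of_all _ fun t => mul_nonneg (integral_nonneg fun ω => hfr_nonneg _)
        (integral_nonneg fun ω => hfr_nonneg _))
      (((hq_sm (n+1)).mul (hq_sm (m+1))).aestronglyMeasurable)]
    congr 1
    refine lintegral_congr fun t => ?_
    rw [ENNReal.ofReal_mul (integral_nonneg fun ω => hfr_nonneg _), key n t, key m t]
  have hA_sm : StronglyMeasurable A := by
    have : A = fun u => ∫ t in Ioi (0:ℝ), ρ (u * t) * ρ ((1 - u) * t) := funext hA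
    rw [this]
    apply MeasureTheory.StronglyMeasurable.integral_prod_right'
      (f := fun p : ℝ × ℝ => ρ (p.1 * p.2) * ρ ((1 - p.1) * p.2))
    exact ((hρ_meas.comp (measurable_fst.mul measurable_snd)).mul
      (hρ_meas.comp ((measurable_const.sub measurable_fst).mul measurable_snd))).stronglyMeasurable
  have hAnn : ∀ u, 0 ≤ A u := fun u => by
    rw [hA]
    exact setIntegral_nonneg measurableSet_Ioi fun t _ => mul_nonneg (hρnn _) (hρnn _)
  have hchoose : ((n+m).choose n : ℝ) = c₀ := by
    rw [Nat.cast_choose ℝ (Nat.le_add_right n m), hc₀def, Nat.add_sub_cancel_left]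
  have hRHS : (∫ u in Ioo (0:ℝ) 1, (Nat.choose (n + m) n : ℝ) * u ^ n * (1 - u) ^ m * A u)
      = (∫⁻ u in Ioo (0:ℝ) 1,
          ENNReal.ofReal (c₀ * u ^ n * (1 - u) ^ m) * PA u).toReal := by
    rw [integral_eq_lintegral_of_nonneg_ae ?nn ?sm]
    case nn =>
      filter_upwards [self_mem_ae_restrict measurableSet_Ioo] with u hu
      obtain ⟨hu0, hu1⟩ := hu
      have h1u : (0:ℝ) ≤ 1 - u := by linarith
      have := hAnn u
      positivity
    case sm =>
      exact ((((stronglyMeasurable_const.mul (measurable_id.pow_const n).stronglyMeasurable).mul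
        ((measurable_const.sub measurable_id).pow_const m).stronglyMeasurable).mul
        hA_sm).aestronglyMeasurable)
    congr 1
    refine lintegral_congr_ae ?_
    filter_upwards [self_mem_ae_restrict measurableSet_Ioo] with u hu
    obtain ⟨hu0, hu1⟩ := hu
    have h1u : (0:ℝ) ≤ 1 - u := by linarith
    rw [hchoose, ENNReal.ofReal_mul (by positivity), hAeq u ⟨hu0, hu1⟩]
  -- step 1: product of integrals to double integral (pointwise in t)
  have step1 : ∀ t : ℝ, (∫⁻ x in Ioi (0:ℝ), Φ n x * Pρ (x * t))
      * (∫⁻ x in Ioi (0:ℝ), Φ m x * Pρ (x * t))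
      = ∫⁻ x in Ioi (0:ℝ), ∫⁻ y in Ioi (0:ℝ),
          (Φ n x * Pρ (x * t)) * (Φ m y * Pρ (y * t)) := by
    intro t
    have hfm : Measurable fun x : ℝ => Φ n x * Pρ (x * t) :=
      (hΦmeas n).mul (hPρ_meas.comp (measurable_id.mul_const t))
    rw [← lintegral_mul_const _ hfm]
    refine lintegral_congr fun x => ?_
    exact (lintegral_const_mul' _ _
      (ENNReal.mul_ne_top (hΦ_ne_top n x) (hPρ_ne_top _))).symm
  -- step 2: swap t and x
  have swapA : ∫⁻ t in Ioi (0:ℝ), ∫⁻ x in Ioi (0:ℝ), (∫⁻ y in Ioi (0:ℝ),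
        (Φ n x * Pρ (x * t)) * (Φ m y * Pρ (y * t)))
      = ∫⁻ x in Ioi (0:ℝ), ∫⁻ t in Ioi (0:ℝ), (∫⁻ y in Ioi (0:ℝ),
        (Φ n x * Pρ (x * t)) * (Φ m y * Pρ (y * t))) := by
    refine lintegral_lintegral_swap ?_
    apply Measurable.aemeasurable
    apply Measurable.lintegral_prod_right'
      (f := fun q : (ℝ × ℝ) × ℝ =>
        (Φ n q.1.2 * Pρ (q.1.2 * q.1.1)) * (Φ m q.2 * Pρ (q.2 * q.1.1)))
    exact (((hΦmeas n).comp (measurable_snd.comp measurable_fst)).mul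
        (hPρ_meas.comp ((measurable_snd.comp measurable_fst).mul
          (measurable_fst.comp measurable_fst)))).mul
      (((hΦmeas m).comp measurable_snd).mul
        (hPρ_meas.comp (measurable_snd.mul (measurable_fst.comp measurable_fst))))
  -- step 3: swap t and y, for each x
  have swapB : ∀ x : ℝ, ∫⁻ t in Ioi (0:ℝ), (∫⁻ y in Ioi (0:ℝ),
        (Φ n x * Pρ (x * t)) * (Φ m y * Pρ (y * t)))
      = ∫⁻ y in Ioi (0:ℝ), (∫⁻ t in Ioi (0:ℝ),
        (Φ n x * Pρ (x * t)) * (Φ m y * Pρ (y * t))) := by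
    intro x
    refine lintegral_lintegral_swap ?_
    apply Measurable.aemeasurable
    exact ((measurable_const.mul (hPρ_meas.comp ((measurable_const.mul measurable_fst))))).mul
      (((hΦmeas m).comp measurable_snd).mul
        (hPρ_meas.comp (measurable_snd.mul measurable_fst)))
  -- step 4: inner t integral
  have step4 : ∀ x ∈ Ioi (0:ℝ), ∀ y ∈ Ioi (0:ℝ),
      (∫⁻ t in Ioi (0:ℝ), (Φ n x * Pρ (x * t)) * (Φ m y * Pρ (y * t)))
        = (Φ n x * Φ m y * ENNReal.ofReal ((x + y)⁻¹)) * PA (x / (x + y)) := by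
    intro x hx y hy
    have hx' : (0:ℝ) < x := hx
    have hy' : (0:ℝ) < y := hy
    have hxy : (0:ℝ) < x + y := by linarith
    have h1 : ∀ t : ℝ, (Φ n x * Pρ (x * t)) * (Φ m y * Pρ (y * t))
        = (Φ n x * Φ m y) * (Pρ (x * t) * Pρ (y * t)) := fun t => by ring
    simp_rw [h1]
    rw [lintegral_const_mul' _ _ (ENNReal.mul_ne_top (hΦ_ne_top n x) (hΦ_ne_top m y))]
    have hBB : (∫⁻ t in Ioi (0:ℝ), Pρ (x * t) * Pρ (y * t))
        = ENNReal.ofReal ((x + y)⁻¹) * PA (x / (x + y)) := by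
      have hsc := scaling (fun s => Pρ (x / (x + y) * s) * Pρ ((1 - x / (x + y)) * s)) hxy
      have harg1 : ∀ t : ℝ, x / (x + y) * ((x + y) * t) = x * t := fun t => by
        field_simp
      have harg2 : ∀ t : ℝ, (1 - x / (x + y)) * ((x + y) * t) = y * t := fun t => by
        field_simp
        ring
      simp_rw [harg1, harg2] at hsc
      rw [show PA (x / (x + y))
          = ∫⁻ s in Ioi (0:ℝ), Pρ (x / (x + y) * s) * Pρ ((1 - x / (x + y)) * s) from rfl,
        hsc, ← mul_assoc, ← ENNReal.ofReal_mul (by positivity),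
        inv_mul_cancel₀ hxy.ne', ENNReal.ofReal_one, one_mul]
    rw [hBB]
    ring
  -- step 5: substitute y = x * w
  have step5 : ∀ x ∈ Ioi (0:ℝ),
      (∫⁻ y in Ioi (0:ℝ), (Φ n x * Φ m y * ENNReal.ofReal ((x + y)⁻¹)) * PA (x / (x + y)))
        = ∫⁻ w in Ioi (0:ℝ), ENNReal.ofReal x *
            ((Φ n x * Φ m (x * w) * ENNReal.ofReal ((x * (1 + w))⁻¹)) * PA ((1 + w)⁻¹)) := by
    intro x hx
    have hx' : (0:ℝ) < x := hx
    rw [scaling (fun y => (Φ n x * Φ m y * ENNReal.ofReal ((x + y)⁻¹)) * PA (x / (x + y))) hx',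
      ← lintegral_const_mul' _ _ ENNReal.ofReal_ne_top]
    refine setLIntegral_congr_fun measurableSet_Ioi (fun w hw => ?_)
    have hw' : (0:ℝ) < w := hw
    have h1w : (0:ℝ) < 1 + w := by linarith
    rw [show x + x * w = x * (1 + w) by ring,
      show x / (x * (1 + w)) = (1 + w)⁻¹ by
        rw [div_eq_iff (by positivity)]
        field_simp]
  -- step 6: swap x and w
  have swapC : ∫⁻ x in Ioi (0:ℝ), ∫⁻ w in Ioi (0:ℝ), ENNReal.ofReal x *
        ((Φ n x * Φ m (x * w) * ENNReal.ofReal ((x * (1 + w))⁻¹)) * PA ((1 + w)⁻¹))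
      = ∫⁻ w in Ioi (0:ℝ), ∫⁻ x in Ioi (0:ℝ), ENNReal.ofReal x *
        ((Φ n x * Φ m (x * w) * ENNReal.ofReal ((x * (1 + w))⁻¹)) * PA ((1 + w)⁻¹)) := by
    refine lintegral_lintegral_swap ?_
    apply Measurable.aemeasurable
    refine (measurable_fst.ennreal_ofReal).mul ?_
    refine Measurable.mul ?_ (hPA_meas.comp (measurable_const.add measurable_snd).inv)
    refine Measurable.mul (f := fun a : ℝ × ℝ => Φ n a.1 * Φ m (a.1 * a.2))
      (g := fun a : ℝ × ℝ => ENNReal.ofReal (a.1 * (1 + a.2))⁻¹) ?_ ?_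
    · exact ((hΦmeas n).comp measurable_fst).mul
        ((hΦmeas m).comp (measurable_fst.mul measurable_snd))
    · exact ((measurable_fst.mul (measurable_const.add measurable_snd)).inv).ennreal_ofReal
  -- step 7: inner x integral
  have step7 : ∀ w ∈ Ioi (0:ℝ),
      (∫⁻ x in Ioi (0:ℝ), ENNReal.ofReal x *
          ((Φ n x * Φ m (x * w) * ENNReal.ofReal ((x * (1 + w))⁻¹)) * PA ((1 + w)⁻¹)))
        = ENNReal.ofReal (c₀ * w ^ m / (1 + w) ^ (n + m + 2)) * PA ((1 + w)⁻¹) := by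
    intro w hw
    have hw' : (0:ℝ) < w := hw
    have h1w : (0:ℝ) < 1 + w := by linarith
    have hufin : (1 + w)⁻¹ ∈ Ioo (0:ℝ) 1 := by
      constructor
      · positivity
      · rw [inv_lt_one_iff₀]
        right
        linarith
    set K : ℝ := w ^ m / ((n.factorial : ℝ) * (m.factorial : ℝ) * (1 + w)) with hKdef
    have hKnn : 0 ≤ K := by positivity
    have hcomb : ∀ x ∈ Ioi (0:ℝ), ENNReal.ofReal x *
        ((Φ n x * Φ m (x * w) * ENNReal.ofReal ((x * (1 + w))⁻¹)) * PA ((1 + w)⁻¹))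
        = ENNReal.ofReal (K * (x ^ (n + m) * exp (-((1 + w) * x)))) * PA ((1 + w)⁻¹) := by
      intro x hx
      have hx' : (0:ℝ) < x := hx
      simp only [hΦdef]
      have hexp : exp (-x) * exp (-(x * w)) = exp (-((1 + w) * x)) := by
        rw [← Real.exp_add]
        congr 1
        ring
      have hfac_n : ((n.factorial : ℝ)) ≠ 0 := Nat.cast_ne_zero.mpr n.factorial_ne_zero
      have hfac_m : ((m.factorial : ℝ)) ≠ 0 := Nat.cast_ne_zero.mpr m.factorial_ne_zero
      calc ENNReal.ofReal x * ((ENNReal.ofReal (x ^ n * exp (-x) / (n.factorial : ℝ))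
            * ENNReal.ofReal ((x * w) ^ m * exp (-(x * w)) / (m.factorial : ℝ))
            * ENNReal.ofReal ((x * (1 + w))⁻¹)) * PA ((1 + w)⁻¹))
          = (ENNReal.ofReal x * ENNReal.ofReal (x ^ n * exp (-x) / (n.factorial : ℝ))
            * ENNReal.ofReal ((x * w) ^ m * exp (-(x * w)) / (m.factorial : ℝ))
            * ENNReal.ofReal ((x * (1 + w))⁻¹)) * PA ((1 + w)⁻¹) := by ring
        _ = ENNReal.ofReal (x * (x ^ n * exp (-x) / (n.factorial : ℝ))
            * ((x * w) ^ m * exp (-(x * w)) / (m.factorial : ℝ))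
            * (x * (1 + w))⁻¹) * PA ((1 + w)⁻¹) := by
            rw [← ENNReal.ofReal_mul hx'.le, ← ENNReal.ofReal_mul (by positivity),
              ← ENNReal.ofReal_mul (by positivity)]
        _ = ENNReal.ofReal (K * (x ^ (n + m) * exp (-((1 + w) * x)))) * PA ((1 + w)⁻¹) := by
            congr 2
            rw [hKdef, ← hexp, mul_pow]
            field_simp
            ring
    rw [setLIntegral_congr_fun measurableSet_Ioi hcomb,
      lintegral_mul_const' _ _ (hPA_lt_top _ hufin).ne]
    congr 1
    have : ∀ x : ℝ, ENNReal.ofReal (K * (x ^ (n + m) * exp (-((1 + w) * x))))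
        = ENNReal.ofReal K * ENNReal.ofReal (x ^ (n + m) * exp (-((1 + w) * x))) :=
      fun x => ENNReal.ofReal_mul hKnn
    simp_rw [this]
    rw [lintegral_const_mul' _ _ ENNReal.ofReal_ne_top, lint_gamma (n + m) h1w,
      ← ENNReal.ofReal_mul hKnn]
    congr 1
    rw [hKdef, hc₀def]
    have hfac_n : ((n.factorial : ℝ)) ≠ 0 := Nat.cast_ne_zero.mpr n.factorial_ne_zero
    have hfac_m : ((m.factorial : ℝ)) ≠ 0 := Nat.cast_ne_zero.mpr m.factorial_ne_zero
    have h1wne : (1 + w) ≠ 0 := h1w.ne'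
    field_simp
    ring
  -- step 8: substitute u = (1+w)⁻¹
  have step8 : (∫⁻ w in Ioi (0:ℝ),
        ENNReal.ofReal (c₀ * w ^ m / (1 + w) ^ (n + m + 2)) * PA ((1 + w)⁻¹))
      = ∫⁻ u in Ioo (0:ℝ) 1, ENNReal.ofReal (c₀ * u ^ n * (1 - u) ^ m) * PA u := by
    have h := lint_image measurableSet_Ioo ratio_deriv ratio_inj
      (fun w => ENNReal.ofReal (c₀ * w ^ m / (1 + w) ^ (n + m + 2)) * PA ((1 + w)⁻¹))
    rw [image_ratio] at h
    rw [h]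
    refine setLIntegral_congr_fun measurableSet_Ioo (fun u hu => ?_)
    obtain ⟨hu0, hu1⟩ := hu
    have harg : 1 + (1 - u) / u = u⁻¹ := by field_simp; ring
    rw [harg, inv_inv, abs_neg, abs_of_nonneg (by positivity : (0:ℝ) ≤ ((u:ℝ) ^ 2)⁻¹),
      ← mul_assoc, ← ENNReal.ofReal_mul (by positivity)]
    congr 2
    have hu0' : u ≠ 0 := ne_of_gt hu0
    rw [inv_pow, div_inv_eq_mul, div_pow]
    field_simp
    ring
  -- assemble
  rw [hLHS, hRHS]
  congr 1
  calc ∫⁻ t in Ioi (0:ℝ), (∫⁻ x in Ioi (0:ℝ), Φ n x * Pρ (x * t))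
        * (∫⁻ x in Ioi (0:ℝ), Φ m x * Pρ (x * t))
      = ∫⁻ t in Ioi (0:ℝ), ∫⁻ x in Ioi (0:ℝ), (∫⁻ y in Ioi (0:ℝ),
          (Φ n x * Pρ (x * t)) * (Φ m y * Pρ (y * t))) := lintegral_congr step1
    _ = ∫⁻ x in Ioi (0:ℝ), ∫⁻ t in Ioi (0:ℝ), (∫⁻ y in Ioi (0:ℝ),
          (Φ n x * Pρ (x * t)) * (Φ m y * Pρ (y * t))) := swapA
    _ = ∫⁻ x in Ioi (0:ℝ), ∫⁻ y in Ioi (0:ℝ), (∫⁻ t in Ioi (0:ℝ),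
          (Φ n x * Pρ (x * t)) * (Φ m y * Pρ (y * t))) := lintegral_congr fun x => swapB x
    _ = ∫⁻ x in Ioi (0:ℝ), ∫⁻ y in Ioi (0:ℝ),
          (Φ n x * Φ m y * ENNReal.ofReal ((x + y)⁻¹)) * PA (x / (x + y)) := by
        refine setLIntegral_congr_fun measurableSet_Ioi (fun x hx => ?_)
        exact setLIntegral_congr_fun measurableSet_Ioi
          (fun y hy => step4 x hx y hy)
    _ = ∫⁻ x in Ioi (0:ℝ), ∫⁻ w in Ioi (0:ℝ), ENNReal.ofReal x *
          ((Φ n x * Φ m (x * w) * ENNReal.ofReal ((x * (1 + w))⁻¹)) * PA ((1 + w)⁻¹)) := by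
        exact setLIntegral_congr_fun measurableSet_Ioi (fun x hx => step5 x hx)
    _ = ∫⁻ w in Ioi (0:ℝ), ∫⁻ x in Ioi (0:ℝ), ENNReal.ofReal x *
          ((Φ n x * Φ m (x * w) * ENNReal.ofReal ((x * (1 + w))⁻¹)) * PA ((1 + w)⁻¹)) := swapC
    _ = ∫⁻ w in Ioi (0:ℝ),
          ENNReal.ofReal (c₀ * w ^ m / (1 + w) ^ (n + m + 2)) * PA ((1 + w)⁻¹) := by
        exact setLIntegral_congr_fun measurableSet_Ioi (fun w hw => step7 w hw)
    _ = ∫⁻ u in Ioo (0:ℝ) 1, ENNReal.ofReal (c₀ * u ^ n * (1 - u) ^ m) * PA u := step8
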